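/- Let p > 0, γ > 1 and β ∈ ℝ. Then lim_{η → 1^+} C*_{β,γ,p,η} / C*_{β,1,p,η} = 0; i.e., the acceptance probability of the rejection algorithm which simulates from m♯_{β,γ,p,η} using proposals from m♯_{β,1,p,η} tends to 0 as η ↓ 1. -/

import Mathlib

open MeasureTheory Set Filter

/-- `C*_{β,γ,p,η} = ∫_1^η θ⁻¹ ∫_{1/θ}^1 (1-u^p)^(γ-1) u^(-1-β) du dθ`. -/
noncomputable def Cstar (β γ p η : ℝ) : ℝ :=
  ∫ θ in (1:ℝ)..η, θ⁻¹ * ∫ u in (1/θ)..(1:ℝ), (1 - u ^ p) ^ (γ - 1) * u ^ (-1 - β)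

lemma contAt_inner (p β e : ℝ) (hp : 0 < p) (he : 0 ≤ e) {u : ℝ} (hu : 0 < u) :
    ContinuousAt (fun u : ℝ => (1 - u ^ p) ^ e * u ^ (-1 - β)) u := by
  have h2 : ContinuousAt (fun u : ℝ => u ^ (-1 - β)) u :=
    Real.continuousAt_rpow_const u _ (Or.inl hu.ne')
  have hb : ContinuousAt (fun u : ℝ => 1 - u ^ p) u :=
    continuousAt_const.sub (Real.continuousAt_rpow_const u p (Or.inl hu.ne'))
  exact ((Real.continuousAt_rpow_const _ e (Or.inr he)).comp hb).mul h2

lemma outer_contOn (p β e η : ℝ) (hp : 0 < p) (he : 0 ≤ e) (hη : 1 < η) :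
    ContinuousOn (fun θ : ℝ => θ⁻¹ * ∫ u in (1/θ)..(1:ℝ), (1 - u ^ p) ^ e * u ^ (-1 - β))
      (Icc 1 η) := by
  have hη0 : (0:ℝ) < η := lt_trans one_pos hη
  set a : ℝ := η⁻¹ with ha
  have ha0 : 0 < a := inv_pos.mpr hη0
  set h : ℝ → ℝ := fun u => (1 - u ^ p) ^ e * u ^ (-1 - β) with hh
  set g : ℝ → ℝ := fun u => h (max u a) with hg
  have hgc : Continuous g := by
    rw [continuous_iff_continuousAt]
    intro u
    have hm : ContinuousAt (fun u : ℝ => max u a) u :=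
      (continuous_id.max continuous_const).continuousAt
    exact ContinuousAt.comp (x := u) (f := fun u : ℝ => max u a)
      (contAt_inner p β e hp he (lt_of_lt_of_le ha0 (le_max_right u a))) hm
  have hP : Continuous fun x : ℝ => ∫ u in x..(1:ℝ), g u := by
    have h1 : Continuous fun b : ℝ => ∫ x in (1:ℝ)..b, g x :=
      intervalIntegral.continuous_primitive (fun a b => hgc.intervalIntegrable a b) 1
    have h2 : (fun x : ℝ => ∫ u in x..(1:ℝ), g u) = fun x => -∫ u in (1:ℝ)..x, g u := by
      funext x; rw [intervalIntegral.integral_symm]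
    rw [h2]; exact h1.neg
  have key : ContinuousOn (fun θ : ℝ => θ⁻¹ * ∫ u in (1/θ)..(1:ℝ), g u) (Icc 1 η) := by
    apply ContinuousOn.mul
    · exact continuousOn_id.inv₀ fun θ hθ => ne_of_gt (lt_of_lt_of_le one_pos hθ.1)
    · apply hP.comp_continuousOn
      exact continuousOn_const.div continuousOn_id
        fun θ hθ => ne_of_gt (lt_of_lt_of_le one_pos hθ.1)
  apply key.congr
  intro θ hθ
  have hθ0 : (0:ℝ) < θ := lt_of_lt_of_le one_pos hθ.1
  have hinvle : 1/θ ≤ 1 := by rw [div_le_one hθ0]; exact hθ.1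
  have hainv : a ≤ 1/θ := by
    rw [ha, inv_eq_one_div]
    exact one_div_le_one_div_of_le hθ0 hθ.2
  have heq : (∫ u in (1/θ)..(1:ℝ), h u) = ∫ u in (1/θ)..(1:ℝ), g u := by
    apply intervalIntegral.integral_congr
    rw [uIcc_of_le hinvle]
    intro u hu
    show h u = h (max u a)
    rw [max_eq_left (le_trans hainv hu.1)]
  show θ⁻¹ * (∫ u in (1/θ)..(1:ℝ), h u) = θ⁻¹ * ∫ u in (1/θ)..(1:ℝ), g u
  rw [heq]

lemma Cstar_nonneg (β γ p η : ℝ) (hp : 0 ≤ p) (hη : 1 ≤ η) : 0 ≤ Cstar β γ p η := by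
  unfold Cstar
  apply intervalIntegral.integral_nonneg hη
  intro θ hθ
  have hθ0 : (0:ℝ) < θ := lt_of_lt_of_le one_pos hθ.1
  apply mul_nonneg (inv_nonneg.mpr hθ0.le)
  apply intervalIntegral.integral_nonneg (by rw [div_le_one hθ0]; exact hθ.1)
  intro u hu
  have hu0 : 0 < u := lt_of_lt_of_le (by positivity) hu.1
  apply mul_nonneg
  · apply Real.rpow_nonneg
    have : u ^ p ≤ 1 := Real.rpow_le_one hu0.le hu.2 hp
    linarith
  · exact Real.rpow_nonneg hu0.le _

lemma Cstar_le (p β γ η : ℝ) (hp : 0 < p) (hγ : 1 < γ) (hη : 1 < η) :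
    Cstar β γ p η ≤ (1 - η ^ (-p)) ^ (γ - 1) * Cstar β 1 p η := by
  have hη0 : (0:ℝ) < η := lt_trans one_pos hη
  set c : ℝ := (1 - η ^ (-p)) ^ (γ - 1) with hcdef
  unfold Cstar
  rw [← intervalIntegral.integral_const_mul]
  apply intervalIntegral.integral_mono_on hη.le ?_ ?_ ?_
  · apply ContinuousOn.intervalIntegrable
    rw [uIcc_of_le hη.le]
    exact outer_contOn p β (γ - 1) η hp (by linarith) hη
  · apply IntervalIntegrable.const_mul
    apply ContinuousOn.intervalIntegrable
    rw [uIcc_of_le hη.le]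
    exact outer_contOn p β (1 - 1) η hp (by norm_num) hη
  · intro θ hθ
    have hθ0 : (0:ℝ) < θ := lt_of_lt_of_le one_pos hθ.1
    have hinv : (0:ℝ) < 1/θ := by positivity
    have hinvle : 1/θ ≤ 1 := by rw [div_le_one hθ0]; exact hθ.1
    have inner : (∫ u in (1/θ)..(1:ℝ), (1 - u ^ p) ^ (γ - 1) * u ^ (-1 - β))
        ≤ c * ∫ u in (1/θ)..(1:ℝ), (1 - u ^ p) ^ ((1:ℝ) - 1) * u ^ (-1 - β) := by
      rw [← intervalIntegral.integral_const_mul]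
      apply intervalIntegral.integral_mono_on hinvle ?_ ?_ ?_
      · apply ContinuousOn.intervalIntegrable
        rw [uIcc_of_le hinvle]
        intro u hu
        exact (contAt_inner p β (γ - 1) hp (by linarith)
          (lt_of_lt_of_le hinv hu.1)).continuousWithinAt
      · apply ContinuousOn.intervalIntegrable
        rw [uIcc_of_le hinvle]
        intro u hu
        exact (continuousAt_const.mul (contAt_inner p β ((1:ℝ) - 1) hp (by norm_num)
          (lt_of_lt_of_le hinv hu.1))).continuousWithinAt
      · intro u hu
        have hu0 : 0 < u := lt_of_lt_of_le hinv hu.1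
        have h1 : u ^ p ≤ 1 := Real.rpow_le_one hu0.le hu.2 hp.le
        have h2 : η ^ (-p) ≤ u ^ p := by
          rw [Real.rpow_neg hη0.le, ← Real.inv_rpow hη0.le]
          apply Real.rpow_le_rpow (by positivity) ?_ hp.le
          calc η⁻¹ = 1/η := (one_div η).symm
            _ ≤ 1/θ := one_div_le_one_div_of_le hθ0 hθ.2
            _ ≤ u := hu.1
        have h3 : (1 - u ^ p) ^ (γ - 1) ≤ c :=
          Real.rpow_le_rpow (by linarith) (by linarith) (by linarith)
        calc (1 - u ^ p) ^ (γ - 1) * u ^ (-1 - β) ≤ c * u ^ (-1 - β) :=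
              mul_le_mul_of_nonneg_right h3 (Real.rpow_nonneg hu0.le _)
          _ = c * ((1 - u ^ p) ^ ((1:ℝ) - 1) * u ^ (-1 - β)) := by
              rw [sub_self, Real.rpow_zero, one_mul]
    calc θ⁻¹ * (∫ u in (1/θ)..(1:ℝ), (1 - u ^ p) ^ (γ - 1) * u ^ (-1 - β))
        ≤ θ⁻¹ * (c * ∫ u in (1/θ)..(1:ℝ), (1 - u ^ p) ^ ((1:ℝ) - 1) * u ^ (-1 - β)) :=
          mul_le_mul_of_nonneg_left inner (inv_nonneg.mpr hθ0.le)
      _ = c * (θ⁻¹ * ∫ u in (1/θ)..(1:ℝ), (1 - u ^ p) ^ ((1:ℝ) - 1) * u ^ (-1 - β)) := by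
          ring

theorem msharp_acceptance_limit (p γ β : ℝ) (hp : 0 < p) (hγ : 1 < γ) :
    Tendsto (fun η : ℝ => Cstar β γ p η / Cstar β 1 p η)
      (nhdsWithin 1 (Ioi 1)) (nhds 0) := by
  have hbound : Tendsto (fun η : ℝ => (1 - η ^ (-p)) ^ (γ - 1))
      (nhdsWithin 1 (Ioi 1)) (nhds 0) := by
    have h1 : Tendsto (fun η : ℝ => 1 - η ^ (-p)) (nhdsWithin 1 (Ioi 1)) (nhds 0) := by
      have hc : ContinuousAt (fun η : ℝ => 1 - η ^ (-p)) 1 :=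
        continuousAt_const.sub (Real.continuousAt_rpow_const 1 (-p) (Or.inl one_ne_zero))
      have h : Tendsto (fun η : ℝ => 1 - η ^ (-p)) (nhdsWithin 1 (Ioi 1))
          (nhds (1 - (1:ℝ) ^ (-p))) := hc.tendsto.mono_left nhdsWithin_le_nhds
      simpa [Real.one_rpow] using h
    have h2 : ContinuousAt (fun x : ℝ => x ^ (γ - 1)) 0 :=
      Real.continuousAt_rpow_const 0 _ (Or.inr (by linarith))
    have h3 := h2.tendsto.comp h1
    simpa [Function.comp_def, Real.zero_rpow (ne_of_gt (by linarith : (0:ℝ) < γ - 1))] using h3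
  apply tendsto_of_tendsto_of_tendsto_of_le_of_le' tendsto_const_nhds hbound
  · filter_upwards [self_mem_nhdsWithin] with η hη
    have hη1 : (1:ℝ) < η := hη
    exact div_nonneg (Cstar_nonneg β γ p η hp.le hη1.le) (Cstar_nonneg β 1 p η hp.le hη1.le)
  · filter_upwards [self_mem_nhdsWithin] with η hη
    have hη1 : (1:ℝ) < η := hη
    have hle := Cstar_le p β γ η hp hγ hη1
    have hbase : 0 ≤ 1 - η ^ (-p) := by
      have : η ^ (-p) ≤ 1 :=
        Real.rpow_le_one_of_one_le_of_nonpos hη1.le (neg_nonpos.mpr hp.le)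
      linarith
    have hden := Cstar_nonneg β 1 p η hp.le hη1.le
    rcases eq_or_lt_of_le hden with h0 | h0
    · rw [← h0, div_zero]
      exact Real.rpow_nonneg hbase _
    · rw [div_le_iff₀ h0]
      exact hle
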